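/- Let S̄ be a global control semigroup. Then Link(Trunc_{**}(S̄), Trunc^{**}(S̄)) is equivalent to S̄: for every g in Link(Trunc_{**}(S̄), Trunc^{**}(S̄)) there is f ∈ S̄ with g(x) ≤ f(x) for all x ≥ 0, and conversely for every f ∈ S̄ there is g in Link(Trunc_{**}(S̄), Trunc^{**}(S̄)) with f(x) ≤ g(x) for all x ≥ 0. Moreover, for any small-scale control semigroup ξ and any control semigroup S, Trunc^{**}(Link(ξ,S)) is equivalent to S (mutual domination on neighborhoods of ∞) and Trunc_{**}(Link(ξ,S)) is equivalent to ξ (mutual domination on neighborhoods of 0). -/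

import Mathlib

open Filter Set Metric Topology
open scoped NNReal ENNReal

/-- A large-scale (asymptotic) dim-control function: continuous, increasing,
eventually at least the identity, tending to infinity. -/
def IsLSControl (f : ℝ≥0 → ℝ≥0) : Prop :=
  Continuous f ∧ Monotone f ∧ (∀ᶠ x in atTop, x ≤ f x) ∧ Tendsto f atTop atTop

/-- Asymptotically linear: coincides with a linear function on a neighborhood of infinity. -/
def IsAsympLinear (f : ℝ≥0 → ℝ≥0) : Prop :=
  ∃ a b : ℝ≥0, ∀ᶠ x in atTop, f x = a * x + b

/-- A (large-scale) control semigroup. -/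
def IsControlSemigroup (S : Set (ℝ≥0 → ℝ≥0)) : Prop :=
  (∀ f ∈ S, IsLSControl f) ∧
  (∀ f, IsLSControl f → IsAsympLinear f → f ∈ S) ∧
  (∀ f ∈ S, ∀ g ∈ S, f ∘ g ∈ S)

/-- A family of subsets is `s`-disjoint if distinct members are at distance `> s`. -/
def SDisjoint {X : Type*} [MetricSpace X] (s : ℝ≥0) (𝒰 : Set (Set X)) : Prop :=
  ∀ U ∈ 𝒰, ∀ V ∈ 𝒰, U ≠ V → ∀ x ∈ U, ∀ y ∈ V, (s : ℝ) < dist x y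

/-- A family of subsets is `D`-bounded if each member has diameter at most `D`. -/
def BoundedBy {X : Type*} [MetricSpace X] (D : ℝ≥0) (𝒰 : Set (Set X)) : Prop :=
  ∀ U ∈ 𝒰, EMetric.diam U ≤ (D : ℝ≥0∞)

/-- `asdim_S X ≤ n`. -/
def ASDimLE (S : Set (ℝ≥0 → ℝ≥0)) (X : Type*) [MetricSpace X] (n : ℕ) : Prop :=
  ∃ f ∈ S, ∃ s₀ : ℝ≥0, ∀ s : ℝ≥0, s₀ ≤ s →
    ∃ 𝒰 : Fin (n + 1) → Set (Set X),
      (⋃ i, ⋃₀ 𝒰 i) = univ ∧ ∀ i, SDisjoint s (𝒰 i) ∧ BoundedBy (f s) (𝒰 i)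

/-- The `S`-controlled asymptotic dimension, as an element of `ℕ∞`. -/
noncomputable def ASDim (S : Set (ℝ≥0 → ℝ≥0)) (X : Type*) [MetricSpace X] : ℕ∞ :=
  sInf {k : ℕ∞ | ∃ n : ℕ, k = n ∧ ASDimLE S X n}

/-- `S₁ ⪯ S₂` : `S₂` is finer than `S₁`. -/
def Preceq (S₁ S₂ : Set (ℝ≥0 → ℝ≥0)) : Prop :=
  ∀ f ∈ S₂, ∃ g ∈ S₁, ∀ᶠ x in atTop, f x ≤ g x

/-- A small-scale dim-control function. -/
def IsSSControl (f : ℝ≥0 → ℝ≥0) : Prop :=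
  Continuous f ∧ Monotone f ∧ f 0 = 0 ∧ ∀ᶠ x in 𝓝[>] (0 : ℝ≥0), x ≤ f x

/-- Coincides with a linear function on a neighborhood of `0`. -/
def IsLinearNearZero (f : ℝ≥0 → ℝ≥0) : Prop :=
  ∃ a b : ℝ≥0, ∀ᶠ x in 𝓝 (0 : ℝ≥0), f x = a * x + b

/-- A small-scale control semigroup. -/
def IsSSControlSemigroup (ξ : Set (ℝ≥0 → ℝ≥0)) : Prop :=
  (∀ f ∈ ξ, IsSSControl f) ∧
  (∀ f, IsSSControl f → IsLinearNearZero f → f ∈ ξ) ∧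
  (∀ f ∈ ξ, ∀ g ∈ ξ, f ∘ g ∈ ξ)

/-- A global dim-control function. -/
def IsGlobalControl (f : ℝ≥0 → ℝ≥0) : Prop :=
  Continuous f ∧ Monotone f ∧ f 0 = 0 ∧ Tendsto f atTop atTop ∧
    (∀ᶠ x in 𝓝[>] (0 : ℝ≥0), x ≤ f x) ∧ (∀ᶠ x in atTop, x ≤ f x)

/-- A global control semigroup. -/
def IsGlobalControlSemigroup (S : Set (ℝ≥0 → ℝ≥0)) : Prop :=
  (∀ f ∈ S, IsGlobalControl f) ∧
  (∀ f, IsGlobalControl f → IsLinearNearZero f → IsAsympLinear f → f ∈ S) ∧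
  (∀ f ∈ S, ∀ g ∈ S, f ∘ g ∈ S)

/-- `smdim_ξ X ≤ n`. -/
def SMDimLE (ξ : Set (ℝ≥0 → ℝ≥0)) (X : Type*) [MetricSpace X] (n : ℕ) : Prop :=
  ∃ f ∈ ξ, ∃ s₀ : ℝ≥0, 0 < s₀ ∧ ∀ s : ℝ≥0, 0 < s → s ≤ s₀ →
    ∃ 𝒰 : Fin (n + 1) → Set (Set X),
      (⋃ i, ⋃₀ 𝒰 i) = univ ∧ ∀ i, SDisjoint s (𝒰 i) ∧ BoundedBy (f s) (𝒰 i)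

/-- The `ξ`-controlled small-scale dimension. -/
noncomputable def SMDim (ξ : Set (ℝ≥0 → ℝ≥0)) (X : Type*) [MetricSpace X] : ℕ∞ :=
  sInf {k : ℕ∞ | ∃ n : ℕ, k = n ∧ SMDimLE ξ X n}

/-- `dim_S̄ X ≤ n` (global dimension). -/
def GDimLE (S : Set (ℝ≥0 → ℝ≥0)) (X : Type*) [MetricSpace X] (n : ℕ) : Prop :=
  ∃ f ∈ S, ∀ s : ℝ≥0, 0 < s →
    ∃ 𝒰 : Fin (n + 1) → Set (Set X),
      (⋃ i, ⋃₀ 𝒰 i) = univ ∧ ∀ i, SDisjoint s (𝒰 i) ∧ BoundedBy (f s) (𝒰 i)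

/-- The `S̄`-controlled global dimension. -/
noncomputable def GDim (S : Set (ℝ≥0 → ℝ≥0)) (X : Type*) [MetricSpace X] : ℕ∞ :=
  sInf {k : ℕ∞ | ∃ n : ℕ, k = n ∧ GDimLE S X n}

/-- Large-scale truncation `Trunc^{**}(S̄)`. -/
def TruncInf (S : Set (ℝ≥0 → ℝ≥0)) : Set (ℝ≥0 → ℝ≥0) :=
  {g | IsLSControl g ∧ ∃ f ∈ S, ∀ᶠ x in atTop, g x = f x}

/-- Small-scale truncation `Trunc_{**}(S̄)`. -/
def TruncZero (S : Set (ℝ≥0 → ℝ≥0)) : Set (ℝ≥0 → ℝ≥0) :=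
  {g | IsSSControl g ∧ ∃ f ∈ S, ∀ᶠ x in 𝓝 (0 : ℝ≥0), g x = f x}

/-- The linked set `Link(ξ, S)`. -/
def Link (ξ S : Set (ℝ≥0 → ℝ≥0)) : Set (ℝ≥0 → ℝ≥0) :=
  {g | Continuous g ∧ Monotone g ∧
    ∃ g₁ ∈ ξ, ∃ g₂ ∈ S, (∀ᶠ x in 𝓝 (0 : ℝ≥0), g x = g₁ x) ∧ (∀ᶠ x in atTop, g x = g₂ x)}


section LinkTruncAux

private lemma ev_nhds0 {P : ℝ≥0 → Prop} (h : ∀ᶠ x in 𝓝 (0:ℝ≥0), P x) :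
    ∃ ε : ℝ≥0, 0 < ε ∧ ∀ x, x < ε → P x := by
  rcases NNReal.nhds_zero_basis.eventually_iff.mp h with ⟨ε, hε, hP⟩
  exact ⟨ε, hε, fun x hx => hP hx⟩

private lemma ev_nhds0' {P : ℝ≥0 → Prop} {ε : ℝ≥0} (hε : 0 < ε) (h : ∀ x, x < ε → P x) :
    ∀ᶠ x in 𝓝 (0:ℝ≥0), P x :=
  Filter.eventually_of_mem (Iio_mem_nhds hε) h

private lemma ev_pos {P : ℝ≥0 → Prop} (h : ∀ᶠ x in 𝓝[>] (0:ℝ≥0), P x) :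
    ∃ δ : ℝ≥0, 0 < δ ∧ ∀ x, 0 < x → x < δ → P x := by
  rcases (nhdsGT_basis (0:ℝ≥0)).eventually_iff.mp h with ⟨δ, hδ, hP⟩
  exact ⟨δ, hδ, fun x h1 h2 => hP ⟨h1, h2⟩⟩

private lemma ev_pos' {P : ℝ≥0 → Prop} {δ : ℝ≥0} (hδ : 0 < δ) (h : ∀ x, 0 < x → x < δ → P x) :
    ∀ᶠ x in 𝓝[>] (0:ℝ≥0), P x :=
  (nhdsGT_basis (0:ℝ≥0)).eventually_iff.mpr ⟨δ, hδ, fun x hx => h x hx.1 hx.2⟩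

private lemma bilin_mem {Sb : Set (ℝ≥0 → ℝ≥0)} (hSb : IsGlobalControlSemigroup Sb)
    {K B : ℝ≥0} (hK : 0 < K) (hB : 0 < B) :
    (fun y : ℝ≥0 => y + min (K * y) B) ∈ Sb := by
  apply hSb.2.1
  · refine ⟨?_, ?_, ?_, ?_, ?_, ?_⟩
    · exact continuous_id.add ((continuous_const.mul continuous_id).min continuous_const)
    · intro a b h; exact add_le_add h (min_le_min (mul_le_mul_right h K) le_rfl)
    · simp
    · exact tendsto_atTop_mono (fun x => le_self_add) tendsto_id
    · exact Filter.Eventually.of_forall (fun x => le_self_add)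
    · exact Filter.Eventually.of_forall (fun x => le_self_add)
  · refine ⟨1 + K, 0, ev_nhds0' (div_pos hB hK) (fun x hx => ?_)⟩
    have hxB : K * x ≤ B := by
      rw [mul_comm]; exact ((lt_div_iff₀ hK).mp hx).le
    show x + min (K * x) B = (1 + K) * x + 0
    rw [min_eq_left hxB]; ring
  · refine ⟨1, B, Filter.eventually_atTop.mpr ⟨B / K, fun x hx => ?_⟩⟩
    have hxB : B ≤ K * x := by
      rw [mul_comm]; exact (div_le_iff₀ hK).mp hx
    show x + min (K * x) B = 1 * x + B
    rw [min_eq_right hxB, one_mul]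

end LinkTruncAux

/-- `Link(Trunc_{**}(S̄), Trunc^{**}(S̄)) ≈ S̄`, and conversely truncating a linked
semigroup recovers the pieces up to equivalence. -/
theorem link_trunc_equiv (Sb : Set (ℝ≥0 → ℝ≥0)) (hSb : IsGlobalControlSemigroup Sb)
    (ξ S : Set (ℝ≥0 → ℝ≥0)) (hξ : IsSSControlSemigroup ξ) (hS : IsControlSemigroup S) :
    (∀ g ∈ Link (TruncZero Sb) (TruncInf Sb), ∃ f ∈ Sb, ∀ x : ℝ≥0, g x ≤ f x) ∧
    (∀ f ∈ Sb, ∃ g ∈ Link (TruncZero Sb) (TruncInf Sb), ∀ x : ℝ≥0, f x ≤ g x) ∧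
    (∀ g ∈ TruncInf (Link ξ S), ∃ f ∈ S, ∀ᶠ x in atTop, g x ≤ f x) ∧
    (∀ f ∈ S, ∃ g ∈ TruncInf (Link ξ S), ∀ᶠ x in atTop, f x ≤ g x) ∧
    (∀ g ∈ TruncZero (Link ξ S), ∃ f ∈ ξ, ∀ᶠ x in 𝓝 (0 : ℝ≥0), g x ≤ f x) ∧
    (∀ f ∈ ξ, ∃ g ∈ TruncZero (Link ξ S), ∀ᶠ x in 𝓝 (0 : ℝ≥0), f x ≤ g x) := by
  obtain ⟨hSb1, hSb2, hSb3⟩ := hSb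
  refine ⟨?_, ?_, ?_, ?_, ?_, ?_⟩
  · -- Part 1 : every g in the link is dominated by a member of Sb
    rintro g ⟨hgc, hgm, g₁, ⟨hg₁ss, f₁, hf₁, hEg₁f₁⟩, g₂, ⟨hg₂ls, f₂, hf₂, hEg₂f₂⟩, hE0, hEinf⟩
    obtain ⟨ε, hε, hge⟩ := ev_nhds0 (hE0.and hEg₁f₁)
    obtain ⟨M, hgM⟩ := Filter.eventually_atTop.mp (hEinf.and hEg₂f₂)
    obtain ⟨hf₁c, hf₁m, hf₁0, hf₁t, hf₁s, hf₁l⟩ := hSb1 f₁ hf₁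
    obtain ⟨hf₂c, hf₂m, hf₂0, hf₂t, hf₂s, hf₂l⟩ := hSb1 f₂ hf₂
    obtain ⟨δ, hδ, hδP⟩ := ev_pos hf₂s
    obtain ⟨δ₁, hδ₁, hδ₁P⟩ := ev_pos hf₁s
    obtain ⟨M₂, hM₂⟩ := Filter.eventually_atTop.mp hf₂l
    obtain ⟨M₁, hM₁⟩ := Filter.eventually_atTop.mp hf₁l
    set M' := max M M₁ with hM'def
    set w := min (ε / 2) (δ₁ / 2) with hwdef
    have hw : 0 < w := lt_min (by positivity) (by positivity)
    have hwε : w < ε := (min_le_left _ _).trans_lt (NNReal.half_lt_self hε.ne')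
    have hwδ₁ : w < δ₁ := (min_le_right _ _).trans_lt (NNReal.half_lt_self hδ₁.ne')
    have hc : 0 < f₁ w := hw.trans_le (hδ₁P w hw hwδ₁)
    set c := f₁ w with hcdef
    obtain ⟨N, hN⟩ := Filter.eventually_atTop.mp (hf₂t.eventually (eventually_ge_atTop (g M')))
    set B := max M₂ N + 1 with hBdef
    have hB : 0 < B := by positivity
    set m := min δ c with hmdef
    have hm : 0 < m := lt_min hδ hc
    set K := B / m + 1 with hKdef
    have hK : 0 < K := by positivity
    set ℓ : ℝ≥0 → ℝ≥0 := fun y => y + min (K * y) B with hℓdef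
    have hℓmem : ℓ ∈ Sb := bilin_mem ⟨hSb1, hSb2, hSb3⟩ hK hB
    have hℓge : ∀ y, y ≤ ℓ y := fun y => le_self_add
    have hℓbig : ∀ y, m ≤ y → B ≤ ℓ y := by
      intro y hy
      have h1 : B ≤ K * m := by
        rw [hKdef, add_mul, one_mul, div_mul_cancel₀ _ hm.ne']
        exact le_self_add
      have h2 : B ≤ K * y := h1.trans (mul_le_mul_right hy K)
      calc B = min (K * y) B := (min_eq_right h2).symm
        _ ≤ y + min (K * y) B := le_add_self
    have key : ∀ y, y ≤ f₂ (ℓ y) := by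
      intro y
      rcases lt_or_ge y δ with h | h
      · have hy2 : y ≤ f₂ y := by
          rcases (show (0:ℝ≥0) ≤ y from zero_le).eq_or_lt with h0 | h0
          · rw [← h0, hf₂0]
          · exact hδP y h0 h
        exact hy2.trans (hf₂m (hℓge y))
      · have h2 : M₂ ≤ ℓ y :=
          ((le_max_left M₂ N).trans le_self_add).trans (hℓbig y ((min_le_left δ c).trans h))
        exact (hℓge y).trans (hM₂ _ h2)
    have key2 : ∀ x, w ≤ x → g M' ≤ f₂ (ℓ (f₁ x)) := by
      intro x hx
      have hcx : c ≤ f₁ x := hf₁m hx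
      have hNB : N ≤ B := (le_max_right M₂ N).trans le_self_add
      have : N ≤ ℓ (f₁ x) := hNB.trans (hℓbig _ ((min_le_right δ c).trans hcx))
      exact hN _ this
    refine ⟨f₂ ∘ (ℓ ∘ f₁), hSb3 f₂ hf₂ _ (hSb3 ℓ hℓmem f₁ hf₁), fun x => ?_⟩
    show g x ≤ f₂ (ℓ (f₁ x))
    rcases lt_or_ge x ε with hx | hx
    · obtain ⟨e1, e2⟩ := hge x hx
      rw [e1, e2]; exact key (f₁ x)
    · rcases le_or_gt M' x with hx2 | hx2
      · obtain ⟨e1, e2⟩ := hgM x ((le_max_left M M₁).trans hx2)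
        rw [e1, e2]
        have hxx : x ≤ ℓ (f₁ x) :=
          (hM₁ x ((le_max_right M M₁).trans hx2)).trans (hℓge _)
        exact hf₂m hxx
      · exact (hgm hx2.le).trans (key2 x (hwε.le.trans hx))
  · -- Part 2 : every f ∈ Sb is dominated by a member of the link (itself)
    intro f hf
    obtain ⟨hc, hm, h0, ht, hs, hl⟩ := hSb1 f hf
    exact ⟨f, ⟨hc, hm, f, ⟨⟨hc, hm, h0, hs⟩, f, hf, Filter.Eventually.of_forall fun _ => rfl⟩,
      f, ⟨⟨hc, hm, hl, ht⟩, f, hf, Filter.Eventually.of_forall fun _ => rfl⟩,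
      Filter.Eventually.of_forall fun _ => rfl, Filter.Eventually.of_forall fun _ => rfl⟩,
      fun _ => le_rfl⟩
  · -- Part 3
    rintro g ⟨hgls, h, ⟨hhc, hhm, h₁, hh₁, h₂, hh₂, hE0, hEinf⟩, hE⟩
    exact ⟨h₂, hh₂, (hE.and hEinf).mono fun x ⟨e1, e2⟩ => (e1.trans e2).le⟩
  · -- Part 4
    intro f hf
    obtain ⟨hfc, hfm, hfl, hft⟩ := hS.1 f hf
    obtain ⟨M, hM⟩ := Filter.eventually_atTop.mp hfl
    set T := max M 1 with hTdef
    have hT0 : (0:ℝ≥0) < T := lt_of_lt_of_le one_pos (le_max_right _ _)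
    have hTf : T ≤ f T := hM T (le_max_left _ _)
    set a := f T * T⁻¹ with hadef
    have ha1 : 1 ≤ a := by
      rw [hadef, ← div_eq_mul_inv]
      exact (one_le_div hT0).mpr hTf
    set g : ℝ≥0 → ℝ≥0 := fun x => f (max x T) * min x T * T⁻¹ with hgdef
    have hgc : Continuous g :=
      ((hfc.comp (continuous_id.max continuous_const)).mul
        (continuous_id.min continuous_const)).mul continuous_const
    have hgm : Monotone g := fun x y hxy =>
      mul_le_mul_left (mul_le_mul' (hfm (max_le_max hxy le_rfl)) (min_le_min hxy le_rfl)) _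
    have hglin : ∀ x, x ≤ T → g x = a * x := by
      intro x hx
      simp only [hgdef, hadef, max_eq_right hx, min_eq_left hx]
      ring
    have hgf : ∀ x, T ≤ x → g x = f x := by
      intro x hx
      simp only [hgdef, max_eq_left hx, min_eq_right hx]
      rw [mul_assoc, mul_inv_cancel₀ hT0.ne', mul_one]
    have hg1ξ : (fun x : ℝ≥0 => a * x) ∈ ξ :=
      hξ.2.1 _ ⟨continuous_const.mul continuous_id, fun u v h => mul_le_mul_right h a,
        mul_zero a, Filter.Eventually.of_forall fun x => le_mul_of_one_le_left zero_le ha1⟩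
        ⟨a, 0, Filter.Eventually.of_forall fun x => (add_zero _).symm⟩
    have hgLink : g ∈ Link ξ S :=
      ⟨hgc, hgm, _, hg1ξ, f, hf, ev_nhds0' hT0 (fun x hx => hglin x hx.le),
        Filter.eventually_atTop.mpr ⟨T, hgf⟩⟩
    refine ⟨g, ⟨⟨hgc, hgm, Filter.eventually_atTop.mpr ⟨max T M, fun x hx => ?_⟩, ?_⟩,
      g, hgLink, Filter.Eventually.of_forall fun _ => rfl⟩,
      Filter.eventually_atTop.mpr ⟨T, fun x hx => (hgf x hx).ge⟩⟩
    · rw [hgf x ((le_max_left _ _).trans hx)]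
      exact hM x ((le_max_right _ _).trans hx)
    · exact Filter.Tendsto.congr'
        (Filter.eventually_atTop.mpr ⟨T, fun x hx => (hgf x hx).symm⟩) hft
  · -- Part 5
    rintro g ⟨hgss, h, ⟨hhc, hhm, h₁, hh₁, h₂, hh₂, hE0, hEinf⟩, hE⟩
    exact ⟨h₁, hh₁, (hE.and hE0).mono fun x ⟨e1, e2⟩ => (e1.trans e2).le⟩
  · -- Part 6
    intro f hf
    obtain ⟨hfc, hfm, hf0, hfs⟩ := hξ.1 f hf
    obtain ⟨δ, hδ, hδP⟩ := ev_pos hfs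
    set t := δ / 2 with htdef
    have ht0 : 0 < t := by positivity
    have htδ : t < δ := NNReal.half_lt_self hδ.ne'
    have htf : t ≤ f t := hδP t ht0 htδ
    set b := f t - t with hbdef
    set g : ℝ≥0 → ℝ≥0 := fun x => f (min x t) + (x - t) with hgdef
    have hgc : Continuous g :=
      (hfc.comp (continuous_id.min continuous_const)).add (continuous_id.sub continuous_const)
    have hgm : Monotone g := fun u v h =>
      add_le_add (hfm (min_le_min h le_rfl)) (tsub_le_tsub_right h t)
    have hgsmall : ∀ x, x ≤ t → g x = f x := by
      intro x hx
      simp only [hgdef, min_eq_left hx, tsub_eq_zero_of_le hx, add_zero]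
    have hgbig : ∀ x, t ≤ x → g x = x + b := by
      intro x hx
      simp only [hgdef, hbdef, min_eq_right hx]
      rw [← add_tsub_assoc_of_le hx, ← add_tsub_assoc_of_le htf, add_comm]
    have hg2S : (fun x : ℝ≥0 => x + b) ∈ S :=
      hS.2.1 _ ⟨continuous_id.add continuous_const, fun u v h => add_le_add_left h b,
        Filter.Eventually.of_forall fun x => le_self_add,
        tendsto_atTop_mono (fun x => le_self_add) tendsto_id⟩
        ⟨1, b, Filter.Eventually.of_forall fun x => by rw [one_mul]⟩
    have hgLink : g ∈ Link ξ S :=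
      ⟨hgc, hgm, f, hf, _, hg2S, ev_nhds0' ht0 (fun x hx => hgsmall x hx.le),
        Filter.eventually_atTop.mpr ⟨t, hgbig⟩⟩
    refine ⟨g, ⟨⟨hgc, hgm, ?_, ?_⟩, g, hgLink, Filter.Eventually.of_forall fun _ => rfl⟩,
      ev_nhds0' ht0 fun x hx => (hgsmall x hx.le).ge⟩
    · rw [hgsmall 0 zero_le, hf0]
    · exact ev_pos' ht0 fun x hx1 hx2 => by
        rw [hgsmall x hx2.le]; exact hδP x hx1 (hx2.trans htδ)
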